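/- arXiv:2204.01923 — 2 statements merged into one kernel-verified Lean document; each statement's English description precedes it below -/
import Mathlib

section
/- Let d ≥ 2 and let G be an n-vertex d-regular graph. If G is a 2-expander, or if G is triangle-free and a 1-expander, then every A ⊆ V(G) with 2 ≤ |A| ≤ n/2 satisfies |∇(A)| ≥ 2d−2. -/
open Finset

/-- The edge boundary of a vertex set `A`: the edges of `G` with exactly one endpoint in `A`. -/
def edgeBoundary {V : Type*} [Fintype V] [DecidableEq V] (G : SimpleGraph V)
    [DecidableRel G.Adj] (A : Finset V) : Finset (Sym2 V) :=
  G.edgeFinset.filter (fun e => ∃ u v : V, e = s(u, v) ∧ u ∈ A ∧ v ∉ A)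

/-- `G` is an `η`-expander. -/
def IsExpander {V : Type*} [Fintype V] [DecidableEq V] (G : SimpleGraph V)
    [DecidableRel G.Adj] (η : ℝ) : Prop :=
  ∀ A : Finset V, (A.card : ℝ) ≤ (Fintype.card V : ℝ) / 2 →
    η * A.card ≤ ((edgeBoundary G A).card : ℝ)

lemma boundary_card {V : Type*} [Fintype V] [DecidableEq V] (G : SimpleGraph V)
    [DecidableRel G.Adj] (A : Finset V) :
    (edgeBoundary G A).card = ∑ u ∈ A, (G.neighborFinset u \ A).card := by
  have h1 : (edgeBoundary G A).card
      = ((A ×ˢ Aᶜ).filter fun p => G.Adj p.1 p.2).card := by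
    refine (Finset.card_bij (fun p _ => s(p.1, p.2)) ?_ ?_ ?_).symm
    · rintro ⟨u, v⟩ hp
      simp only [Finset.mem_filter, Finset.mem_product, Finset.mem_compl] at hp
      simp only [edgeBoundary, Finset.mem_filter, SimpleGraph.mem_edgeFinset,
        SimpleGraph.mem_edgeSet]
      exact ⟨hp.2, u, v, rfl, hp.1.1, hp.1.2⟩
    · rintro ⟨a, b⟩ ha ⟨c, d⟩ hc h
      simp only [Finset.mem_filter, Finset.mem_product, Finset.mem_compl] at ha hc
      rw [Sym2.eq_iff] at h
      rcases h with ⟨rfl, rfl⟩ | ⟨rfl, rfl⟩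
      · rfl
      · exact absurd ha.1.1 hc.1.2
    · intro e he
      simp only [edgeBoundary, Finset.mem_filter, SimpleGraph.mem_edgeFinset,
        SimpleGraph.mem_edgeSet] at he
      obtain ⟨he1, u, v, rfl, hu, hv⟩ := he
      exact ⟨(u, v), by simpa [Finset.mem_filter, Finset.mem_product, hu, hv] using he1, rfl⟩
  rw [h1, Finset.card_filter, Finset.sum_product]
  refine Finset.sum_congr rfl fun u _ => ?_
  rw [← Finset.card_filter]
  congr 1
  ext v
  simp [Finset.mem_sdiff, and_comm]

-- Mantel-type bound: in a triangle-free graph, the sum of internal degrees over A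
-- is at most |A|^2 / 2.
lemma mantel_sum {V : Type*} [Fintype V] [DecidableEq V] (G : SimpleGraph V)
    [DecidableRel G.Adj] (hfree : G.CliqueFree 3) (A : Finset V) :
    2 * (∑ u ∈ A, (G.neighborFinset u ∩ A).card) ≤ A.card * A.card := by
  set dA : V → ℕ := fun u => (G.neighborFinset u ∩ A).card with hdA
  have key : ∀ u ∈ A, ∀ v ∈ G.neighborFinset u ∩ A, dA v + dA u ≤ A.card := by
    intro u hu v hv
    simp only [Finset.mem_inter, SimpleGraph.mem_neighborFinset] at hv
    have hdisj : Disjoint (G.neighborFinset v ∩ A) (G.neighborFinset u ∩ A) := by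
      rw [Finset.disjoint_left]
      intro w hw1 hw2
      simp only [Finset.mem_inter, SimpleGraph.mem_neighborFinset] at hw1 hw2
      exact hfree {u, v, w} (SimpleGraph.is3Clique_triple_iff.2 ⟨hv.1, hw2.1, hw1.1⟩)
    calc dA v + dA u = ((G.neighborFinset v ∩ A) ∪ (G.neighborFinset u ∩ A)).card := by
          rw [Finset.card_union_of_disjoint hdisj]
      _ ≤ A.card := Finset.card_le_card (by
          intro w hw
          rcases Finset.mem_union.1 hw with h | h <;>
            exact (Finset.mem_inter.1 h).2)
  -- Q = sum over adjacent pairs in A of dA of second coord = ∑ dA^2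
  have hswap : (∑ u ∈ A, ∑ v ∈ G.neighborFinset u ∩ A, dA v) = ∑ u ∈ A, dA u * dA u := by
    have h1 : ∀ u, G.neighborFinset u ∩ A = A.filter (fun v => G.Adj u v) := by
      intro u; ext v; simp [and_comm]
    calc (∑ u ∈ A, ∑ v ∈ G.neighborFinset u ∩ A, dA v)
        = ∑ u ∈ A, ∑ v ∈ A, if G.Adj u v then dA v else 0 := by
          refine Finset.sum_congr rfl fun u _ => ?_
          rw [h1, Finset.sum_filter]
      _ = ∑ v ∈ A, ∑ u ∈ A, if G.Adj u v then dA v else 0 := Finset.sum_comm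
      _ = ∑ v ∈ A, dA v * dA v := by
          refine Finset.sum_congr rfl fun v _ => ?_
          rw [← Finset.sum_filter, Finset.sum_const, smul_eq_mul, mul_comm]
          congr 1
          rw [hdA]
          congr 1
          ext u; simp [SimpleGraph.adj_comm, and_comm]
  -- pointwise: ∑_{v ∈ N(u)∩A} dA v + dA u * dA u ≤ dA u * A.card
  have hpt : ∀ u ∈ A, (∑ v ∈ G.neighborFinset u ∩ A, dA v) + dA u * dA u ≤ dA u * A.card := by
    intro u hu
    have : (∑ v ∈ G.neighborFinset u ∩ A, (dA v + dA u)) ≤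
        ∑ _v ∈ G.neighborFinset u ∩ A, A.card :=
      Finset.sum_le_sum fun v hv => key u hu v hv
    simpa [Finset.sum_add_distrib, Finset.sum_const, smul_eq_mul, mul_comm] using this
  have h2 : 2 * (∑ u ∈ A, dA u * dA u) ≤ (∑ u ∈ A, dA u) * A.card := by
    have := Finset.sum_le_sum hpt
    rw [Finset.sum_add_distrib, hswap, ← Finset.sum_mul] at this
    omega
  -- Cauchy-Schwarz over ℝ
  have h3 : ((∑ u ∈ A, dA u : ℕ) : ℝ) ^ 2 ≤ (A.card : ℝ) * ((∑ u ∈ A, dA u * dA u : ℕ) : ℝ) := by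
    push_cast
    have := sq_sum_le_card_mul_sum_sq (s := A) (f := fun u => (dA u : ℝ))
    calc (∑ u ∈ A, (dA u : ℝ)) ^ 2 ≤ (A.card : ℝ) * ∑ u ∈ A, (dA u : ℝ) ^ 2 := this
      _ = (A.card : ℝ) * ∑ u ∈ A, (dA u : ℝ) * (dA u : ℝ) := by
          congr 1; exact Finset.sum_congr rfl fun u _ => pow_two _
  set S := ∑ u ∈ A, dA u with hS
  set T := ∑ u ∈ A, dA u * dA u with hT
  rcases Nat.eq_zero_or_pos S with h0 | h0
  · simp [h0]
  -- 2 S^2 ≤ 2 a T ≤ a * S * a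
  have h4 : 2 * S * S ≤ A.card * A.card * S := by
    have h5 : 2 * (S * S) ≤ 2 * (A.card * T) := by
      have h3' : S * S ≤ A.card * T := by
        rw [pow_two] at h3; exact_mod_cast h3
      omega
    calc 2 * S * S = 2 * (S * S) := by ring
      _ ≤ 2 * (A.card * T) := h5
      _ = A.card * (2 * T) := by ring
      _ ≤ A.card * (S * A.card) := Nat.mul_le_mul_left _ h2
      _ = A.card * A.card * S := by ring
  exact Nat.le_of_mul_le_mul_right (by linarith [h4]) h0

theorem stmt7 :
    ∀ (V : Type) [Fintype V] [DecidableEq V] (G : SimpleGraph V) [DecidableRel G.Adj],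
    ∀ d : ℕ, 2 ≤ d → G.IsRegularOfDegree d →
      (IsExpander G 2 ∨ (G.CliqueFree 3 ∧ IsExpander G 1)) →
      ∀ A : Finset V, 2 ≤ A.card → (A.card : ℝ) ≤ (Fintype.card V : ℝ) / 2 →
        2 * d - 2 ≤ (edgeBoundary G A).card := by
  intro V _ _ G _ d hd hreg hexp A hA2 hAhalf
  set B := (edgeBoundary G A).card with hBdef
  set S := ∑ u ∈ A, (G.neighborFinset u ∩ A).card with hSdef
  have hB : B + S = d * A.card := by
    rw [hBdef, boundary_card, hSdef, ← Finset.sum_add_distrib]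
    have h : ∀ u ∈ A, (G.neighborFinset u \ A).card + (G.neighborFinset u ∩ A).card = d := by
      intro u _
      rw [add_comm, Finset.card_inter_add_card_sdiff]
      exact hreg u
    rw [Finset.sum_congr rfl h, Finset.sum_const, smul_eq_mul, mul_comm]
  rcases hexp with hexp | ⟨hfree, hexp⟩
  · rcases le_or_gt (2 * d) (2 * A.card + 2) with hc | hc
    · have h1 := hexp A hAhalf
      have h2 : 2 * A.card ≤ B := by exact_mod_cast (by push_cast; linarith :
        ((2 * A.card : ℕ) : ℝ) ≤ (B : ℝ))
      omega
    · have hS : S + A.card ≤ A.card * A.card := by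
        have h : ∀ u ∈ A, (G.neighborFinset u ∩ A).card + 1 ≤ A.card := by
          intro u hu
          have hsub : G.neighborFinset u ∩ A ⊆ A.erase u := by
            intro v hv
            simp only [Finset.mem_inter, SimpleGraph.mem_neighborFinset] at hv
            exact Finset.mem_erase.2 ⟨hv.1.ne', hv.2⟩
          have := Finset.card_le_card hsub
          rw [Finset.card_erase_of_mem hu] at this
          omega
        calc S + A.card = ∑ u ∈ A, ((G.neighborFinset u ∩ A).card + 1) := by
              rw [Finset.sum_add_distrib, Finset.sum_const, smul_eq_mul, mul_one]
          _ ≤ ∑ _u ∈ A, A.card := Finset.sum_le_sum h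
          _ = A.card * A.card := by rw [Finset.sum_const, smul_eq_mul]
      have hgoal : 2 * d ≤ B + 2 := by
        have hB' : (B : ℤ) + S = d * A.card := by exact_mod_cast hB
        have hS' : (S : ℤ) + A.card ≤ A.card * A.card := by exact_mod_cast hS
        have hA2' : (2 : ℤ) ≤ A.card := by exact_mod_cast hA2
        have hc' : (A.card : ℤ) + 2 ≤ d := by
          have : 2 * A.card + 2 < 2 * d := hc
          omega
        have hnn : (0 : ℤ) ≤ ((A.card : ℤ) - 2) * ((d : ℤ) - A.card - 1) :=
          mul_nonneg (by linarith) (by linarith)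
        have : (2 : ℤ) * d ≤ B + 2 := by nlinarith
        exact_mod_cast this
      omega
  · rcases le_or_gt (A.card + 2) (2 * d) with hc | hc
    · have hS2 : 2 * S ≤ A.card * A.card := mantel_sum G hfree A
      have hgoal : 2 * d ≤ B + 2 := by
        have hB' : (B : ℤ) + S = d * A.card := by exact_mod_cast hB
        have hS' : 2 * (S : ℤ) ≤ A.card * A.card := by exact_mod_cast hS2
        have hA2' : (2 : ℤ) ≤ A.card := by exact_mod_cast hA2
        have hc' : (A.card : ℤ) + 2 ≤ 2 * d := by exact_mod_cast hc
        have hnn : (0 : ℤ) ≤ ((A.card : ℤ) - 2) * (2 * (d : ℤ) - A.card - 2) :=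
          mul_nonneg (by linarith) (by linarith)
        have : (2 : ℤ) * d ≤ B + 2 := by nlinarith
        exact_mod_cast this
      omega
    · have h1 := hexp A hAhalf
      have h2 : A.card ≤ B := by exact_mod_cast (by linarith :
        ((A.card : ℕ) : ℝ) ≤ (B : ℝ))
      omega
end

section
/- Let a, b, c, e be integers with 1 ≤ a ≤ c and 1 ≤ b ≤ e, let q ≥ 2 be an integer, and let β ≥ 0 be real. Then q^{−(1/a + 1/b)} · Z_{K_{a,b}}(q,β)^{1/(ab)} ≤ q^{−(1/c + 1/e)} · Z_{K_{c,e}}(q,β)^{1/(ce)}, where K_{s,t} denotes the complete bipartite graph with parts of sizes s and t. -/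
open Finset

/-- The number of monochromatic edges of `G` under the coloring `σ`. -/
def monoCount {V : Type*} [Fintype V] [DecidableEq V] (G : SimpleGraph V)
    [DecidableRel G.Adj] {k : ℕ} (σ : V → Fin k) : ℕ :=
  (G.edgeFinset.filter (fun e => ∃ u v : V, e = s(u, v) ∧ σ u = σ v)).card

/-- The Potts model partition function `Z_G(q,β)`. -/
noncomputable def pottsZ {V : Type*} [Fintype V] [DecidableEq V] (G : SimpleGraph V)
    [DecidableRel G.Adj] (q : ℕ) (β : ℝ) : ℝ :=
  ∑ σ : V → Fin q, Real.exp (β * monoCount G σ)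

/-- The complete bipartite graph `K_{a,b}`. -/
def biclique (a b : ℕ) : SimpleGraph (Fin a ⊕ Fin b) where
  Adj x y := x.isLeft ≠ y.isLeft
  symm := ⟨fun _ _ h => Ne.symm h⟩
  loopless := ⟨fun _ h => h rfl⟩

instance (a b : ℕ) : DecidableRel (biclique a b).Adj :=
  fun x y => inferInstanceAs (Decidable (x.isLeft ≠ y.isLeft))

lemma monoCount_biclique {a b q : ℕ} (σ : Fin a ⊕ Fin b → Fin q) :
    monoCount (biclique a b) σ =
      (univ.filter (fun p : Fin a × Fin b => σ (Sum.inl p.1) = σ (Sum.inr p.2))).card := by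
  unfold monoCount
  refine (Finset.card_bij (fun p _ => s(Sum.inl p.1, Sum.inr p.2)) ?_ ?_ ?_).symm
  · rintro ⟨i, v⟩ hp
    simp only [mem_filter, mem_univ, true_and] at hp
    simp only [mem_filter, SimpleGraph.mem_edgeFinset, SimpleGraph.mem_edgeSet]
    refine ⟨?_, Sum.inl i, Sum.inr v, rfl, hp⟩
    simp [biclique]
  · rintro ⟨i, v⟩ _ ⟨i', v'⟩ _ h
    simpa using h
  · rintro e he
    simp only [mem_filter, SimpleGraph.mem_edgeFinset, SimpleGraph.mem_edgeSet] at he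
    induction e using Sym2.ind with
    | _ x y =>
      obtain ⟨hadj, u, w, huw, hσ⟩ := he
      have hxy : σ x = σ y := by
        rw [Sym2.eq_iff] at huw
        rcases huw with ⟨rfl, rfl⟩ | ⟨rfl, rfl⟩
        · exact hσ
        · exact hσ.symm
      have hadj' : x.isLeft ≠ y.isLeft := hadj
      rcases x with i | v <;> rcases y with i' | v' <;> simp at hadj'
      · exact ⟨(i, v'), by simpa using hxy, rfl⟩
      · exact ⟨(i', v), by simpa using hxy.symm, Sym2.eq_swap⟩

lemma pottsZ_biclique (a b q : ℕ) (β : ℝ) :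
    pottsZ (biclique a b) q β = ∑ σL : Fin a → Fin q, ∑ σR : Fin b → Fin q,
      Real.exp (β * (univ.filter (fun p : Fin a × Fin b => σL p.1 = σR p.2)).card) := by
  unfold pottsZ
  rw [← (Equiv.sumArrowEquivProdArrow (Fin a) (Fin b) (Fin q)).symm.sum_comp
    (fun σ => Real.exp (β * monoCount (biclique a b) σ)), Fintype.sum_prod_type]
  refine Finset.sum_congr rfl fun σL _ => Finset.sum_congr rfl fun σR _ => ?_
  rw [monoCount_biclique]
  rfl

lemma pottsZ_biclique_symm (a b q : ℕ) (β : ℝ) :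
    pottsZ (biclique a b) q β = pottsZ (biclique b a) q β := by
  rw [pottsZ_biclique, pottsZ_biclique, Finset.sum_comm]
  refine Finset.sum_congr rfl fun σR _ => Finset.sum_congr rfl fun σL _ => ?_
  congr 2
  refine Nat.cast_inj.mpr (Finset.card_nbij Prod.swap ?_ ?_ ?_)
  · rintro ⟨i, v⟩ hp; simp_all [eq_comm]
  · rintro ⟨i, v⟩ _ ⟨i', v'⟩ _ h; simp [Prod.ext_iff] at h ⊢; tauto
  · rintro ⟨v, i⟩ hp; exact ⟨(i, v), by simp_all [eq_comm], rfl⟩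

lemma pottsZ_biclique_pow (a b q : ℕ) (β : ℝ) :
    pottsZ (biclique a b) q β = ∑ σL : Fin a → Fin q,
      (∑ j : Fin q, Real.exp (β * (univ.filter (fun i : Fin a => σL i = j)).card)) ^ b := by
  rw [pottsZ_biclique]
  refine Finset.sum_congr rfl fun σL _ => ?_
  have hcard : ∀ σR : Fin b → Fin q,
      ((univ.filter (fun p : Fin a × Fin b => σL p.1 = σR p.2)).card : ℕ)
        = ∑ v : Fin b, (univ.filter (fun i : Fin a => σL i = σR v)).card := by
    intro σR
    rw [Finset.card_filter, Fintype.sum_prod_type, Finset.sum_comm]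
    exact Finset.sum_congr rfl fun v _ => (Finset.card_filter _ _).symm
  have hstep : ∀ σR : Fin b → Fin q,
      Real.exp (β * (univ.filter (fun p : Fin a × Fin b => σL p.1 = σR p.2)).card)
        = ∏ v : Fin b, Real.exp (β * (univ.filter (fun i : Fin a => σL i = σR v)).card) := by
    intro σR
    rw [hcard, Nat.cast_sum, Finset.mul_sum, Real.exp_sum]
  rw [Finset.sum_congr rfl fun σR _ => hstep σR]
  have : (∑ j : Fin q, Real.exp (β * (univ.filter (fun i : Fin a => σL i = j)).card)) ^ b
      = ∏ _v : Fin b, ∑ j : Fin q, Real.exp (β * (univ.filter (fun i : Fin a => σL i = j)).card) := by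
    rw [Finset.prod_const, Finset.card_univ, Fintype.card_fin]
  rw [this, Finset.prod_univ_sum, Fintype.piFinset_univ]

lemma potts_normalize (a b : ℕ) (ha : a ≠ 0) (hb : b ≠ 0) (q : ℝ) (hq : 0 < q) (M : ℝ)
    (hM : 0 ≤ M) :
    q ^ (-(1 / (a : ℝ) + 1 / (b : ℝ))) * ((q ^ (a + b) : ℝ) * M) ^ (1 / ((a : ℝ) * b))
      = M ^ (1 / ((a : ℝ) * b)) := by
  have ha' : (a : ℝ) ≠ 0 := Nat.cast_ne_zero.mpr ha
  have hb' : (b : ℝ) ≠ 0 := Nat.cast_ne_zero.mpr hb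
  rw [Real.mul_rpow (by positivity) hM, ← Real.rpow_natCast q (a + b),
    ← Real.rpow_mul hq.le, ← mul_assoc, ← Real.rpow_add hq]
  have : -(1 / (a : ℝ) + 1 / (b : ℝ)) + (↑(a + b) : ℝ) * (1 / ((a : ℝ) * b)) = 0 := by
    push_cast
    field_simp
    ring
  rw [this, Real.rpow_zero, one_mul]

lemma potts_lyapunov {ι : Type*} [Fintype ι] [Nonempty ι] (X : ι → ℝ) (hX : ∀ i, 0 ≤ X i)
    (b e : ℕ) (hb : b ≠ 0) (hbe : b ≤ e) :
    ((∑ i, X i ^ b) / Fintype.card ι) ^ ((1:ℝ) / b)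
      ≤ ((∑ i, X i ^ e) / Fintype.card ι) ^ ((1:ℝ) / e) := by
  have he : e ≠ 0 := by omega
  have hn : (0:ℝ) < Fintype.card ι := by positivity
  have hb' : (b : ℝ) ≠ 0 := Nat.cast_ne_zero.mpr hb
  have he' : (e : ℝ) ≠ 0 := Nat.cast_ne_zero.mpr he
  set n : ℝ := (Fintype.card ι : ℝ) with hn_def
  have hsum : ∀ m : ℕ, (∑ i, X i ^ m) / n = ∑ i, (1/n) * (X i ^ m) := fun m => by
    rw [Finset.sum_div]; exact Finset.sum_congr rfl fun i _ => by ring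
  have hMb : (0:ℝ) ≤ (∑ i, X i ^ b) / n :=
    div_nonneg (Finset.sum_nonneg fun i _ => pow_nonneg (hX i) b) hn.le
  have key : ((∑ i, X i ^ b) / n) ^ ((e:ℝ) / b) ≤ (∑ i, X i ^ e) / n := by
    rw [hsum b, hsum e]
    have H := Real.rpow_arith_mean_le_arith_mean_rpow Finset.univ (fun _ => 1/n)
      (fun i => X i ^ b) (fun i _ => one_div_nonneg.mpr hn.le)
      (by rw [Finset.sum_const, Finset.card_univ, nsmul_eq_mul, ← hn_def]; field_simp)
      (fun i _ => pow_nonneg (hX i) b)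
      (p := (e:ℝ)/b)
      (by rw [le_div_iff₀ (by positivity : (0:ℝ) < (b:ℝ)), one_mul]; exact_mod_cast hbe)
    refine H.trans_eq (Finset.sum_congr rfl fun i _ => ?_)
    congr 1
    rw [← Real.rpow_natCast (X i) b, ← Real.rpow_mul (hX i), ← Real.rpow_natCast (X i) e]
    congr 1
    field_simp
  have H2 := Real.rpow_le_rpow (Real.rpow_nonneg hMb _) key
    (by positivity : (0:ℝ) ≤ 1/(e:ℝ))
  have hexp : ((e:ℝ)/b) * (1/(e:ℝ)) = 1/(b:ℝ) := by field_simp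
  rwa [← Real.rpow_mul hMb, hexp] at H2

lemma potts_key (a b e q : ℕ) (ha : 1 ≤ a) (hb : 1 ≤ b) (hbe : b ≤ e) (hq : 2 ≤ q)
    (β : ℝ) (hβ : 0 ≤ β) :
    (q : ℝ) ^ (-(1 / (a : ℝ) + 1 / (b : ℝ))) *
        pottsZ (biclique a b) q β ^ (1 / ((a : ℝ) * b))
      ≤ (q : ℝ) ^ (-(1 / (a : ℝ) + 1 / (e : ℝ))) *
        pottsZ (biclique a e) q β ^ (1 / ((a : ℝ) * e)) := by
  have hq0 : (0:ℝ) < (q:ℝ) := by positivity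
  have hq0' : (q:ℝ) ≠ 0 := hq0.ne'
  haveI : Nonempty (Fin q) := ⟨⟨0, by omega⟩⟩
  set X : (Fin a → Fin q) → ℝ := fun σL =>
    (∑ j : Fin q, Real.exp (β * (univ.filter (fun i : Fin a => σL i = j)).card)) / q with hX_def
  have hX0 : ∀ σL, 0 ≤ X σL := fun σL => by
    apply div_nonneg _ hq0.le
    exact Finset.sum_nonneg fun j _ => (Real.exp_pos _).le
  have hcard : (Fintype.card (Fin a → Fin q) : ℝ) = (q:ℝ) ^ a := by
    rw [Fintype.card_fun, Fintype.card_fin, Fintype.card_fin, Nat.cast_pow]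
  have hZ : ∀ m : ℕ, pottsZ (biclique a m) q β =
      (q:ℝ) ^ (a + m) * ((∑ σL, X σL ^ m) / Fintype.card (Fin a → Fin q)) := by
    intro m
    rw [pottsZ_biclique_pow, hcard, pow_add]
    have hg : ∀ σL : Fin a → Fin q,
        (∑ j : Fin q, Real.exp (β * ((univ.filter (fun i : Fin a => σL i = j)).card : ℕ)))
          = (q:ℝ) * X σL := by
      intro σL
      rw [hX_def]
      dsimp only
      field_simp
    rw [Finset.sum_congr rfl fun σL _ => by rw [hg σL, mul_pow], ← Finset.mul_sum]
    have hqa : ((q:ℝ))^a ≠ 0 := by positivity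
    field_simp
  have hM : ∀ m : ℕ, 0 ≤ (∑ σL, X σL ^ m) / (Fintype.card (Fin a → Fin q) : ℝ) := fun m =>
    div_nonneg (Finset.sum_nonneg fun σL _ => pow_nonneg (hX0 σL) m) (by positivity)
  rw [hZ b, hZ e, potts_normalize a b (by omega) (by omega) _ hq0 _ (hM b),
      potts_normalize a e (by omega) (by omega) _ hq0 _ (hM e)]
  have lyap := potts_lyapunov X hX0 b e (by omega) hbe
  have key := Real.rpow_le_rpow (Real.rpow_nonneg (hM b) _) lyap
    (by positivity : (0:ℝ) ≤ 1/(a:ℝ))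
  have hE : ∀ m : ℕ, (1/(m:ℝ)) * (1/(a:ℝ)) = 1/((a:ℝ)*m) := fun m => by
    rw [div_mul_div_comm, one_mul, mul_comm]
  rwa [← Real.rpow_mul (hM b), ← Real.rpow_mul (hM e), hE b, hE e] at key

theorem stmt10 :
    ∀ a b c e : ℕ, 1 ≤ a → a ≤ c → 1 ≤ b → b ≤ e →
    ∀ q : ℕ, 2 ≤ q → ∀ β : ℝ, 0 ≤ β →
      (q : ℝ) ^ (-(1 / (a : ℝ) + 1 / (b : ℝ))) *
          pottsZ (biclique a b) q β ^ (1 / ((a : ℝ) * b))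
        ≤ (q : ℝ) ^ (-(1 / (c : ℝ) + 1 / (e : ℝ))) *
          pottsZ (biclique c e) q β ^ (1 / ((c : ℝ) * e)) := by
  intro a b c e ha hac hb hbe q hq β hβ
  have he : 1 ≤ e := hb.trans hbe
  calc (q : ℝ) ^ (-(1 / (a : ℝ) + 1 / (b : ℝ))) *
          pottsZ (biclique a b) q β ^ (1 / ((a : ℝ) * b))
      ≤ (q : ℝ) ^ (-(1 / (a : ℝ) + 1 / (e : ℝ))) *
          pottsZ (biclique a e) q β ^ (1 / ((a : ℝ) * e)) :=
        potts_key a b e q ha hb hbe hq β hβ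
    _ = (q : ℝ) ^ (-(1 / (e : ℝ) + 1 / (a : ℝ))) *
          pottsZ (biclique e a) q β ^ (1 / ((e : ℝ) * a)) := by
        rw [pottsZ_biclique_symm a e, add_comm (1 / (a:ℝ)), mul_comm (a:ℝ)]
    _ ≤ (q : ℝ) ^ (-(1 / (e : ℝ) + 1 / (c : ℝ))) *
          pottsZ (biclique e c) q β ^ (1 / ((e : ℝ) * c)) :=
        potts_key e a c q he ha hac hq β hβ
    _ = (q : ℝ) ^ (-(1 / (c : ℝ) + 1 / (e : ℝ))) *
          pottsZ (biclique c e) q β ^ (1 / ((c : ℝ) * e)) := by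
        rw [pottsZ_biclique_symm e c, add_comm (1 / (e:ℝ)), mul_comm (e:ℝ)]
end
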